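/- Let f(z) = Σ_{n≥0} c_n z^n be holomorphic on D_R with Re f > 0 on D_R. Then for every q > 0, every integer m ≥ 1, and every z with |z| = r < R, (Σ_{n=m}^∞ |c_n z^n|^q)^{1/q} ≤ (2 r^m) / (R^{m-1} (R^q - r^q)^{1/q}) · Re f(0). -/

import Mathlib

open Complex Metric

set_option maxHeartbeats 4000000
open Complex Metric intervalIntegral Real

lemma int_exp_aux (j : ℤ) :
    (∫ θ in (0:ℝ)..(2*Real.pi), Complex.exp (j * θ * Complex.I))
      = if j = 0 then (2*Real.pi : ℂ) else 0 := by
  split_ifs with h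
  · simp [h]
  · have hc : (j : ℂ) * Complex.I ≠ 0 := by
      simp [Complex.ext_iff, Complex.I_ne_zero, h]
    have : ∀ θ : ℝ, (j : ℂ) * θ * Complex.I = ((j:ℂ) * Complex.I) * θ := by intro θ; ring
    simp_rw [this]
    rw [integral_exp_mul_complex hc]
    have h1 : Complex.exp ((j:ℂ) * Complex.I * ((2*Real.pi:ℝ):ℂ)) = 1 := by
      have := Complex.exp_int_mul_two_pi_mul_I j
      rw [← this]; push_cast; ring_nf
    rw [h1]
    norm_num

lemma norm_cexp_aux (n : ℕ) (θ : ℝ) : ‖Complex.exp (-(n:ℂ) * θ * Complex.I)‖ = 1 := by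
  rw [show (-(n:ℂ) * (θ:ℂ) * Complex.I) = (((-((n:ℝ) * θ):ℝ)):ℂ) * Complex.I by
    push_cast; ring]
  exact Complex.norm_exp_ofReal_mul_I (-((n:ℝ) * θ))

lemma summable_aux {R : ℝ} {c : ℕ → ℂ} {f : ℂ → ℂ}
    (hsum : ∀ w ∈ ball (0:ℂ) R, HasSum (fun n : ℕ => c n * w ^ n) (f w))
    {ρ : ℝ} (h0 : 0 ≤ ρ) (hρ : ρ < R) :
    Summable (fun k : ℕ => ‖c k‖ * ρ ^ k) := by
  set ρ' : ℝ := (ρ + R) / 2 with hρ'def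
  have hρ'1 : ρ < ρ' := by simp [hρ'def]; linarith
  have hρ'2 : ρ' < R := by simp [hρ'def]; linarith
  have hρ'0 : 0 < ρ' := lt_of_le_of_lt h0 hρ'1
  have hw : (ρ' : ℂ) ∈ ball (0:ℂ) R := by
    simp [mem_ball_zero_iff, Complex.norm_real, abs_of_pos hρ'0, hρ'2]
  have hS : Summable (fun k : ℕ => c k * (ρ' : ℂ) ^ k) := (hsum _ hw).summable
  have ht : Filter.Tendsto (fun k : ℕ => ‖c k * (ρ' : ℂ) ^ k‖) Filter.atTop (nhds 0) := by
    simpa using hS.tendsto_atTop_zero.norm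
  obtain ⟨M, hM⟩ := ht.bddAbove_range
  have hM' : ∀ k, ‖c k‖ * ρ' ^ k ≤ M := by
    intro k
    have := hM (Set.mem_range_self k)
    simpa [norm_mul, norm_pow, Complex.norm_real, abs_of_pos hρ'0] using this
  have hgeom : Summable (fun k : ℕ => M * (ρ / ρ') ^ k) :=
    (summable_geometric_of_lt_one (div_nonneg h0 hρ'0.le)
      ((div_lt_one hρ'0).mpr hρ'1)).mul_left M
  refine Summable.of_nonneg_of_le (fun k => by positivity) (fun k => ?_) hgeom
  have : ‖c k‖ * ρ ^ k = (‖c k‖ * ρ' ^ k) * (ρ / ρ') ^ k := by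
    field_simp
    rw [mul_assoc, ← mul_pow]
    congr 2
    field_simp
  rw [this]
  exact mul_le_mul_of_nonneg_right (hM' k) (by positivity)

lemma swap_aux {R : ℝ} {f : ℂ → ℂ} {c : ℕ → ℂ}
    (hf : DifferentiableOn ℂ f (ball 0 R))
    (hsum : ∀ w ∈ ball (0:ℂ) R, HasSum (fun n : ℕ => c n * w ^ n) (f w))
    {ρ : ℝ} (h0 : 0 ≤ ρ) (hρ : ρ < R) (n : ℤ) :
    HasSum (fun k : ℕ => (c k * (ρ:ℂ) ^ k) * (if (k:ℤ) + n = 0 then (2*Real.pi:ℂ) else 0))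
      (∫ θ in (0:ℝ)..(2*Real.pi),
        f ((ρ:ℂ) * Complex.exp (θ * Complex.I)) * Complex.exp (n * θ * Complex.I)) := by
  have hmem : ∀ θ : ℝ, (ρ:ℂ) * Complex.exp (θ * Complex.I) ∈ ball (0:ℂ) R := by
    intro θ
    simp only [mem_ball_zero_iff, norm_mul, Complex.norm_real,
      Complex.norm_exp_ofReal_mul_I, mul_one, Real.norm_eq_abs, _root_.abs_of_nonneg h0]
    exact hρ
  have key : HasSum
      (fun k : ℕ => ∫ θ in (0:ℝ)..(2*Real.pi),
        c k * ((ρ:ℂ) * Complex.exp (θ * Complex.I)) ^ k * Complex.exp (n * θ * Complex.I))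
      (∫ θ in (0:ℝ)..(2*Real.pi),
        f ((ρ:ℂ) * Complex.exp (θ * Complex.I)) * Complex.exp (n * θ * Complex.I)) := by
    apply intervalIntegral.hasSum_integral_of_dominated_convergence
      (bound := fun k (_ : ℝ) => ‖c k‖ * ρ ^ k)
    · intro k
      apply Continuous.aestronglyMeasurable
      fun_prop
    · intro k
      filter_upwards with θ _
      have h1 : ‖Complex.exp ((θ:ℂ) * Complex.I)‖ = 1 := Complex.norm_exp_ofReal_mul_I θ
      have h2 : ‖Complex.exp ((n:ℂ) * (θ:ℂ) * Complex.I)‖ = 1 := by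
        have : ((n:ℂ) * (θ:ℂ)) = (((n * θ : ℝ)):ℂ) := by push_cast; ring
        rw [this]
        exact Complex.norm_exp_ofReal_mul_I _
      simp only [norm_mul, norm_pow, Complex.norm_real, Real.norm_eq_abs,
        _root_.abs_of_nonneg h0, h1, h2, mul_one]
      exact le_refl _
    · filter_upwards with θ _
      exact summable_aux hsum h0 hρ
    · exact intervalIntegrable_const
    · filter_upwards with θ _
      exact (hsum _ (hmem θ)).mul_right _
  have hFk : ∀ k : ℕ,
      (∫ θ in (0:ℝ)..(2*Real.pi),
        c k * ((ρ:ℂ) * Complex.exp (θ * Complex.I)) ^ k * Complex.exp (n * θ * Complex.I))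
      = (c k * (ρ:ℂ) ^ k) * (if (k:ℤ) + n = 0 then (2*Real.pi:ℂ) else 0) := by
    intro k
    have heq : ∀ θ : ℝ,
        c k * ((ρ:ℂ) * Complex.exp (θ * Complex.I)) ^ k * Complex.exp (n * θ * Complex.I)
        = (c k * (ρ:ℂ) ^ k) * Complex.exp ((((k:ℤ) + n : ℤ):ℂ) * θ * Complex.I) := by
      intro θ
      rw [mul_pow, ← Complex.exp_nat_mul]
      have h3 : ((((k:ℤ) + n : ℤ)):ℂ) * θ * Complex.I
          = (k:ℂ) * ((θ:ℂ) * Complex.I) + (n:ℂ) * θ * Complex.I := by push_cast; ring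
      rw [h3, Complex.exp_add]
      ring
    simp_rw [heq]
    rw [intervalIntegral.integral_const_mul, int_exp_aux]
  simpa only [hFk] using key

lemma intervalIntegral_conj {f : ℝ → ℂ} {a b : ℝ} :
    (∫ x in a..b, (starRingEnd ℂ) (f x)) = (starRingEnd ℂ) (∫ x in a..b, f x) := by
  simp only [intervalIntegral, ← integral_conj, map_sub]

lemma coeff_bound {R : ℝ} {f : ℂ → ℂ} {c : ℕ → ℂ} (hR : 0 < R)
    (hf : DifferentiableOn ℂ f (ball 0 R))
    (hsum : ∀ w ∈ ball (0:ℂ) R, HasSum (fun n : ℕ => c n * w ^ n) (f w))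
    (hpos : ∀ w ∈ ball (0:ℂ) R, 0 < (f w).re)
    {n : ℕ} (hn : 1 ≤ n) {ρ : ℝ} (h0 : 0 ≤ ρ) (hρ : ρ < R) :
    ‖c n‖ * ρ ^ n ≤ 2 * (f 0).re := by
  have pi_pos := Real.pi_pos
  have hmem : ∀ θ : ℝ, (ρ:ℂ) * Complex.exp (θ * Complex.I) ∈ ball (0:ℂ) R := by
    intro θ
    simp only [mem_ball_zero_iff, norm_mul, Complex.norm_real,
      Complex.norm_exp_ofReal_mul_I, mul_one, Real.norm_eq_abs, _root_.abs_of_nonneg h0]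
    exact hρ
  have hc0 : c 0 = f 0 := by
    have h1 := hsum 0 (by simpa [mem_ball_zero_iff] using hR)
    have h2 : HasSum (fun k : ℕ => c k * (0:ℂ) ^ k) (c 0 * (0:ℂ) ^ 0) :=
      hasSum_single 0 (fun b hb => by simp [zero_pow hb])
    simpa using h2.unique h1
  -- continuity of the integrands
  have hwcont : Continuous (fun θ : ℝ => (ρ:ℂ) * Complex.exp (θ * Complex.I)) := by fun_prop
  have hcont : Continuous (fun θ : ℝ => f ((ρ:ℂ) * Complex.exp (θ * Complex.I))) :=
    hf.continuousOn.comp_continuous hwcont hmem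
  have hecont : ∀ j : ℤ, Continuous (fun θ : ℝ => Complex.exp ((j:ℂ) * θ * Complex.I)) := by
    intro j; fun_prop
  have hint : ∀ j : ℤ, IntervalIntegrable
      (fun θ : ℝ => f ((ρ:ℂ) * Complex.exp (θ * Complex.I)) * Complex.exp ((j:ℂ) * θ * Complex.I))
      MeasureTheory.volume 0 (2*Real.pi) :=
    fun j => (hcont.mul (hecont j)).intervalIntegrable _ _
  -- the integral against e^{-inθ} equals 2π c_n ρ^n
  have hA := swap_aux hf hsum h0 hρ (-(n:ℤ))
  simp only [Int.cast_neg, Int.cast_natCast] at hA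
  have hA' : HasSum (fun k : ℕ => if k = n then (c n * (ρ:ℂ)^n) * (2*Real.pi:ℂ) else 0)
      (∫ θ in (0:ℝ)..(2*Real.pi),
        f ((ρ:ℂ) * Complex.exp (θ * Complex.I)) * Complex.exp ((-(n:ℤ):ℂ) * θ * Complex.I)) := by
    refine HasSum.congr_fun hA ?_
    intro k
    by_cases h : k = n
    · subst h; simp
    · have hne : ¬ ((k:ℤ) + -(n:ℤ) = 0) := by omega
      simp [h, hne]
  have hIA : (∫ θ in (0:ℝ)..(2*Real.pi),
        f ((ρ:ℂ) * Complex.exp (θ * Complex.I)) * Complex.exp ((-(n:ℤ):ℂ) * θ * Complex.I))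
      = (c n * (ρ:ℂ)^n) * (2*Real.pi:ℂ) :=
    ((hasSum_ite_eq n _).unique hA').symm ▸ (hA'.unique (hasSum_ite_eq n _)).symm
  -- the integral against e^{+inθ} is zero
  have hB := swap_aux hf hsum h0 hρ (n:ℤ)
  have hB' : HasSum (fun _ : ℕ => (0:ℂ))
      (∫ θ in (0:ℝ)..(2*Real.pi),
        f ((ρ:ℂ) * Complex.exp (θ * Complex.I)) * Complex.exp (((n:ℤ):ℂ) * θ * Complex.I)) := by
    refine HasSum.congr_fun hB ?_
    intro k
    have hne : ¬ ((k:ℤ) + (n:ℤ) = 0) := by omega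
    simp [hne]
  have hIB : (∫ θ in (0:ℝ)..(2*Real.pi),
        f ((ρ:ℂ) * Complex.exp (θ * Complex.I)) * Complex.exp (((n:ℤ):ℂ) * θ * Complex.I)) = 0 :=
    (hB'.unique hasSum_zero)
  -- the integral of f itself is 2π f 0
  have h0' := swap_aux hf hsum h0 hρ (0:ℤ)
  have h0'' : HasSum (fun k : ℕ => if k = 0 then (c 0 * (ρ:ℂ)^0) * (2*Real.pi:ℂ) else 0)
      (∫ θ in (0:ℝ)..(2*Real.pi),
        f ((ρ:ℂ) * Complex.exp (θ * Complex.I)) * Complex.exp (((0:ℤ):ℂ) * θ * Complex.I)) := by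
    refine HasSum.congr_fun h0' ?_
    intro k
    by_cases h : k = 0
    · subst h; simp
    · have hne : ¬ ((k:ℤ) + (0:ℤ) = 0) := by omega
      simp [h, hne]
  have hI0 : (∫ θ in (0:ℝ)..(2*Real.pi), f ((ρ:ℂ) * Complex.exp (θ * Complex.I)))
      = (f 0) * (2*Real.pi:ℂ) := by
    have h2 := h0''.unique (hasSum_ite_eq 0 _)
    simpa [hc0] using h2
  push_cast at hIA hIB
  have hexpconj : ∀ θ : ℝ, (starRingEnd ℂ) (Complex.exp ((n:ℂ) * θ * Complex.I))
      = Complex.exp (-(n:ℂ) * θ * Complex.I) := by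
    intro θ
    rw [← Complex.exp_conj]
    congr 1
    simp only [map_mul, Complex.conj_I, Complex.conj_ofReal, map_natCast]
    ring
  have hIB' : (∫ θ in (0:ℝ)..(2*Real.pi),
      (starRingEnd ℂ) (f ((ρ:ℂ) * Complex.exp (θ * Complex.I)))
        * Complex.exp (-(n:ℂ) * θ * Complex.I)) = 0 := by
    have : (∫ θ in (0:ℝ)..(2*Real.pi),
        (starRingEnd ℂ) (f ((ρ:ℂ) * Complex.exp (θ * Complex.I))
          * Complex.exp ((n:ℂ) * θ * Complex.I))) = 0 := by
      rw [intervalIntegral_conj, hIB, map_zero]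
    rw [← this]
    congr 1
    funext θ
    rw [map_mul, hexpconj]
  -- continuity facts
  have hecontn : Continuous (fun θ : ℝ => Complex.exp (-(n:ℂ) * θ * Complex.I)) := by fun_prop
  have hfe : IntervalIntegrable
      (fun θ : ℝ => f ((ρ:ℂ) * Complex.exp (θ * Complex.I)) * Complex.exp (-(n:ℂ) * θ * Complex.I))
      MeasureTheory.volume 0 (2*Real.pi) :=
    (hcont.mul hecontn).intervalIntegrable _ _
  have hce : IntervalIntegrable
      (fun θ : ℝ => (starRingEnd ℂ) (f ((ρ:ℂ) * Complex.exp (θ * Complex.I)))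
        * Complex.exp (-(n:ℂ) * θ * Complex.I))
      MeasureTheory.volume 0 (2*Real.pi) :=
    ((Complex.continuous_conj.comp hcont).mul hecontn).intervalIntegrable _ _
  -- the integral of (2 Re f) e^{-inθ}
  have key2 : (∫ θ in (0:ℝ)..(2*Real.pi),
      ((2 * (f ((ρ:ℂ) * Complex.exp (θ * Complex.I))).re : ℝ) : ℂ)
        * Complex.exp (-(n:ℂ) * θ * Complex.I))
      = (c n * (ρ:ℂ)^n) * (2*Real.pi:ℂ) := by
    have hpt : ∀ θ : ℝ,
        ((2 * (f ((ρ:ℂ) * Complex.exp (θ * Complex.I))).re : ℝ) : ℂ)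
          * Complex.exp (-(n:ℂ) * θ * Complex.I)
        = f ((ρ:ℂ) * Complex.exp (θ * Complex.I)) * Complex.exp (-(n:ℂ) * θ * Complex.I)
          + (starRingEnd ℂ) (f ((ρ:ℂ) * Complex.exp (θ * Complex.I)))
            * Complex.exp (-(n:ℂ) * θ * Complex.I) := by
      intro θ
      rw [← add_mul, Complex.add_conj]
    simp_rw [hpt]
    rw [intervalIntegral.integral_add hfe hce, hIB', hIA, add_zero]
  -- norm estimate
  have hnorm : ‖(c n * (ρ:ℂ)^n) * (2*Real.pi:ℂ)‖
      ≤ ∫ θ in (0:ℝ)..(2*Real.pi), 2 * (f ((ρ:ℂ) * Complex.exp (θ * Complex.I))).re := by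
    have hb1 : ‖∫ θ in (0:ℝ)..(2*Real.pi),
        ((2 * (f ((ρ:ℂ) * Complex.exp (θ * Complex.I))).re : ℝ) : ℂ)
          * Complex.exp (-(n:ℂ) * θ * Complex.I)‖
        ≤ ∫ θ in (0:ℝ)..(2*Real.pi),
          ‖((2 * (f ((ρ:ℂ) * Complex.exp (θ * Complex.I))).re : ℝ) : ℂ)
            * Complex.exp (-(n:ℂ) * θ * Complex.I)‖ :=
      intervalIntegral.norm_integral_le_integral_norm (by positivity)
    have hb2 : (∫ θ in (0:ℝ)..(2*Real.pi),
        ‖((2 * (f ((ρ:ℂ) * Complex.exp (θ * Complex.I))).re : ℝ) : ℂ)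
          * Complex.exp (-(n:ℂ) * θ * Complex.I)‖)
        = ∫ θ in (0:ℝ)..(2*Real.pi), 2 * (f ((ρ:ℂ) * Complex.exp (θ * Complex.I))).re := by
      apply intervalIntegral.integral_congr
      intro θ _
      simp only
      have h2 : ‖Complex.exp (-(n:ℂ) * θ * Complex.I)‖ = 1 := norm_cexp_aux n θ
      simp only [norm_mul, h2, mul_one, Complex.norm_real, Real.norm_eq_abs]
      rw [_root_.abs_of_nonneg (hpos _ (hmem θ)).le]
      norm_num
    rw [← key2]
    exact hb1.trans (le_of_eq hb2)
  -- compute the real integral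
  have hV : (∫ θ in (0:ℝ)..(2*Real.pi), 2 * (f ((ρ:ℂ) * Complex.exp (θ * Complex.I))).re)
      = 4 * Real.pi * (f 0).re := by
    have h1 : ((∫ θ in (0:ℝ)..(2*Real.pi),
          2 * (f ((ρ:ℂ) * Complex.exp (θ * Complex.I))).re : ℝ) : ℂ)
        = (f 0) * (2*Real.pi:ℂ) + (starRingEnd ℂ) ((f 0) * (2*Real.pi:ℂ)) := by
      rw [← intervalIntegral.integral_ofReal]
      have hpt : ∀ θ : ℝ,
          ((2 * (f ((ρ:ℂ) * Complex.exp (θ * Complex.I))).re : ℝ) : ℂ)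
          = f ((ρ:ℂ) * Complex.exp (θ * Complex.I))
            + (starRingEnd ℂ) (f ((ρ:ℂ) * Complex.exp (θ * Complex.I))) := by
        intro θ
        rw [Complex.add_conj]
      simp_rw [hpt]
      have hic : IntervalIntegrable
          (fun θ : ℝ => (starRingEnd ℂ) (f ((ρ:ℂ) * Complex.exp (θ * Complex.I))))
          MeasureTheory.volume 0 (2*Real.pi) :=
        ((Complex.continuous_conj.comp hcont).intervalIntegrable _ _)
      rw [intervalIntegral.integral_add (hcont.intervalIntegrable _ _) hic,
        intervalIntegral_conj, hI0]
    have h2 : ((f 0) * (2*Real.pi:ℂ) + (starRingEnd ℂ) ((f 0) * (2*Real.pi:ℂ)))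
        = ((4 * Real.pi * (f 0).re : ℝ) : ℂ) := by
      rw [Complex.add_conj]
      congr 1
      simp [Complex.mul_re]
      ring
    rw [h2] at h1
    exact_mod_cast h1
  rw [hV] at hnorm
  have hnn : ‖(c n * (ρ:ℂ)^n) * (2*Real.pi:ℂ)‖ = ‖c n‖ * ρ^n * (2*Real.pi) := by
    have h2pi : ‖(2*(Real.pi:ℂ))‖ = 2*Real.pi := by
      rw [show (2*(Real.pi:ℂ)) = (((2*Real.pi : ℝ)):ℂ) by push_cast; ring,
        Complex.norm_real, Real.norm_eq_abs, _root_.abs_of_nonneg (by positivity)]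
    rw [norm_mul, norm_mul, norm_pow, Complex.norm_real, Real.norm_eq_abs,
      _root_.abs_of_nonneg h0, h2pi]
  rw [hnn] at hnorm
  nlinarith [Real.pi_pos, norm_nonneg (c n), pow_nonneg h0 n]

lemma coeff_bound' {R : ℝ} {f : ℂ → ℂ} {c : ℕ → ℂ} (hR : 0 < R)
    (hf : DifferentiableOn ℂ f (ball 0 R))
    (hsum : ∀ w ∈ ball (0:ℂ) R, HasSum (fun n : ℕ => c n * w ^ n) (f w))
    (hpos : ∀ w ∈ ball (0:ℂ) R, 0 < (f w).re)
    {n : ℕ} (hn : 1 ≤ n) : ‖c n‖ * R ^ n ≤ 2 * (f 0).re := by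
  have ht : Filter.Tendsto (fun ρ : ℝ => ‖c n‖ * ρ ^ n) (nhdsWithin R (Set.Iio R))
      (nhds (‖c n‖ * R ^ n)) := by
    apply Filter.Tendsto.mono_left _ nhdsWithin_le_nhds
    exact Continuous.tendsto (by fun_prop) R
  refine le_of_tendsto ht ?_
  filter_upwards [Ioo_mem_nhdsLT_of_mem (Set.mem_Ioc.mpr ⟨hR, le_refl R⟩)] with ρ hρ
  exact coeff_bound hR hf hsum hpos hn hρ.1.le hρ.2

theorem stmt5 (R r q : ℝ) (m : ℕ) (f : ℂ → ℂ) (c : ℕ → ℂ)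
    (hR : 0 < R) (hq : 0 < q) (hm : 1 ≤ m) (hr : 0 ≤ r) (h3 : r < R)
    (hf : DifferentiableOn ℂ f (ball 0 R))
    (hsum : ∀ w ∈ ball (0:ℂ) R, HasSum (fun n : ℕ => c n * w ^ n) (f w))
    (hpos : ∀ w ∈ ball (0:ℂ) R, 0 < (f w).re)
    (z : ℂ) (hz : ‖z‖ = r) :
    (∑' k : ℕ, ‖c (m + k) * z ^ (m + k)‖ ^ q) ^ (1 / q) ≤
      2 * r ^ m / (R ^ (m - 1) * (R ^ q - r ^ q) ^ (1 / q)) * (f 0).re := by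
  set a : ℝ := 2 * (f 0).re with ha
  have ha0 : 0 < a := by
    have := hpos 0 (by simpa [mem_ball_zero_iff] using hR)
    positivity
  set u : ℝ := r / R with hu
  have hu0 : 0 ≤ u := div_nonneg hr hR.le
  have hu1 : u < 1 := (div_lt_one hR).mpr h3
  set s : ℝ := u ^ q with hs
  have hs0 : 0 ≤ s := Real.rpow_nonneg hu0 q
  have hs1 : s < 1 := Real.rpow_lt_one hu0 hu1 hq
  have hswap : ∀ (x : ℝ), 0 ≤ x → ∀ n : ℕ, ((x ^ n : ℝ)) ^ q = (x ^ q) ^ n := by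
    intro x hx n
    rw [← Real.rpow_natCast x n, ← Real.rpow_natCast (x ^ q) n,
      ← Real.rpow_mul hx, ← Real.rpow_mul hx]
    congr 1
    ring
  -- termwise bound
  have hterm : ∀ k : ℕ, ‖c (m + k) * z ^ (m + k)‖ ^ q ≤ a ^ q * (s ^ m * s ^ k) := by
    intro k
    have h1 : ‖c (m + k) * z ^ (m + k)‖ ≤ a * u ^ (m + k) := by
      rw [norm_mul, norm_pow, hz]
      have h2 : ‖c (m + k)‖ * R ^ (m + k) ≤ a :=
        coeff_bound' hR hf hsum hpos (le_trans hm (Nat.le_add_right m k))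
      have hRk : (0:ℝ) < R ^ (m + k) := pow_pos hR _
      calc ‖c (m + k)‖ * r ^ (m + k)
          = (‖c (m + k)‖ * R ^ (m + k)) * u ^ (m + k) := by
            rw [hu, div_pow]
            field_simp
        _ ≤ a * u ^ (m + k) :=
            mul_le_mul_of_nonneg_right h2 (pow_nonneg hu0 _)
    calc ‖c (m + k) * z ^ (m + k)‖ ^ q ≤ (a * u ^ (m + k)) ^ q :=
          Real.rpow_le_rpow (norm_nonneg _) h1 hq.le
      _ = a ^ q * (s ^ m * s ^ k) := by
          rw [Real.mul_rpow ha0.le (pow_nonneg hu0 _), hswap u hu0, ← hs, ← pow_add]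
  have hsumm : Summable (fun k : ℕ => a ^ q * (s ^ m * s ^ k)) := by
    apply Summable.mul_left
    exact (summable_geometric_of_lt_one hs0 hs1).mul_left _
  have hsummL : Summable (fun k : ℕ => ‖c (m + k) * z ^ (m + k)‖ ^ q) :=
    Summable.of_nonneg_of_le (fun k => Real.rpow_nonneg (norm_nonneg _) q) hterm hsumm
  have htsum : (∑' k : ℕ, ‖c (m + k) * z ^ (m + k)‖ ^ q) ≤ a ^ q * (s ^ m * (1 - s)⁻¹) := by
    calc (∑' k : ℕ, ‖c (m + k) * z ^ (m + k)‖ ^ q)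
        ≤ ∑' k : ℕ, a ^ q * (s ^ m * s ^ k) := Summable.tsum_le_tsum hterm hsummL hsumm
      _ = a ^ q * (s ^ m * (1 - s)⁻¹) := by
          rw [tsum_mul_left, tsum_mul_left, tsum_geometric_of_lt_one hs0 hs1]
  -- take q-th roots
  have hLHS : (∑' k : ℕ, ‖c (m + k) * z ^ (m + k)‖ ^ q) ^ (1 / q)
      ≤ (a ^ q * (s ^ m * (1 - s)⁻¹)) ^ (1 / q) :=
    Real.rpow_le_rpow (tsum_nonneg (fun k => Real.rpow_nonneg (norm_nonneg _) q)) htsum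
      (by positivity)
  refine hLHS.trans (le_of_eq ?_)
  -- simplify the right-hand side
  have h1s : 1 - s = (R ^ q - r ^ q) / R ^ q := by
    rw [hs, hu, Real.div_rpow hr hR.le]
    have : (0:ℝ) < R ^ q := Real.rpow_pos_of_pos hR q
    field_simp
  have hD : (0:ℝ) < R ^ q - r ^ q := by
    have := Real.rpow_lt_rpow hr h3 hq
    linarith
  have hRq : (0:ℝ) < R ^ q := Real.rpow_pos_of_pos hR q
  have hqq : q * (1 / q) = 1 := by field_simp
  have hrootRq : (R ^ q) ^ (1 / q) = R := by
    rw [← Real.rpow_mul hR.le, hqq, Real.rpow_one]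
  have haq : (a ^ q) ^ (1 / q) = a := by
    rw [← Real.rpow_mul ha0.le, hqq, Real.rpow_one]
  have hsm : (s ^ m) ^ (1 / q) = u ^ m := by
    rw [hs, ← hswap u hu0, ← Real.rpow_mul (pow_nonneg hu0 m), hqq, Real.rpow_one]
  have hDroot : (0:ℝ) < (R ^ q - r ^ q) ^ (1 / q) := Real.rpow_pos_of_pos hD _
  have hinv : ((1 - s)⁻¹) ^ (1 / q) = R / (R ^ q - r ^ q) ^ (1 / q) := by
    rw [h1s, ← Real.rpow_neg_one ((R ^ q - r ^ q) / R ^ q), ← Real.rpow_mul (by positivity)]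
    rw [show (-1) * (1/q) = -(1/q) by ring, Real.rpow_neg (by positivity),
      Real.div_rpow hD.le hRq.le, hrootRq]
    rw [inv_div]
  have hs1' : (0:ℝ) ≤ (1 - s)⁻¹ := inv_nonneg.mpr (sub_nonneg.mpr hs1.le)
  rw [Real.mul_rpow (Real.rpow_nonneg ha0.le q) (mul_nonneg (pow_nonneg hs0 m) hs1'),
    Real.mul_rpow (pow_nonneg hs0 m) hs1', haq, hsm, hinv]
  have hRm : R ^ m = R ^ (m - 1) * R := by
    rw [← pow_succ]
    congr 1
    omega
  rw [hu, div_pow, hRm]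
  have hRm1 : (0:ℝ) < R ^ (m - 1) := pow_pos hR _
  field_simp
  ring
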